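/- Let K = ⟨y1x1 - x2 - x3, y2x2 - x3 - x1, y3x3 - x1 - x2, y1y2y3 - y1 - y2 - y3 - 2⟩ in Z[x1,x2,x3,y1,y2,y3]. Then the quotient ring Z[x1,x2,x3,y1,y2,y3]/K is isomorphic to the subring of Z[x1^{±1},x2^{±1},x3^{±1}] generated by x1, x2, x3, (x2+x3)/x1, (x3+x1)/x2, (x1+x2)/x3, with the isomorphism sending xi to xi and yi to the corresponding Laurent polynomial. -/

import Mathlib

/-- The Laurent polynomial ring `ℤ[x₁^{±1}, x₂^{±1}, x₃^{±1}]`. -/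
abbrev MvLaurent3 : Type := AddMonoidAlgebra ℤ (Fin 3 →₀ ℤ)

/-- The (invertible) variable `xᵢ`. -/
noncomputable def Xu (i : Fin 3) : MvLaurent3ˣ :=
  Units.map (AddMonoidAlgebra.of ℤ (Fin 3 →₀ ℤ))
    (toUnits (Multiplicative.ofAdd (Finsupp.single i (1 : ℤ))))

/-- The adjacent cluster variables `y₁ = (x₂+x₃)/x₁`, `y₂ = (x₃+x₁)/x₂`,
`y₃ = (x₁+x₂)/x₃`. -/
noncomputable def yv (i : Fin 3) : MvLaurent3 :=
  ((Xu (i + 1) : MvLaurent3) + (Xu (i + 2) : MvLaurent3)) * (((Xu i)⁻¹ : MvLaurent3ˣ) : MvLaurent3)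

/-- The ring homomorphism `π : ℤ[x₁,x₂,x₃,y₁,y₂,y₃] → ℤ[x₁^{±1},x₂^{±1},x₃^{±1}]`,
`π(xᵢ) = xᵢ`, `π(yᵢ) = (x_{i+1}+x_{i+2})/xᵢ`; variables indexed by `Fin 3 ⊕ Fin 3`. -/
noncomputable def piHom : MvPolynomial (Fin 3 ⊕ Fin 3) ℤ →+* MvLaurent3 :=
  (MvPolynomial.aeval (Sum.elim (fun i => ((Xu i : MvLaurent3ˣ) : MvLaurent3)) yv)).toRingHom

open MvPolynomial in
/-- The ideal `K = ⟨y₁x₁-x₂-x₃, y₂x₂-x₃-x₁, y₃x₃-x₁-x₂, y₁y₂y₃-y₁-y₂-y₃-2⟩`. -/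
noncomputable def K : Ideal (MvPolynomial (Fin 3 ⊕ Fin 3) ℤ) :=
  Ideal.span
    { X (Sum.inr 0) * X (Sum.inl 0) - X (Sum.inl 1) - X (Sum.inl 2),
      X (Sum.inr 1) * X (Sum.inl 1) - X (Sum.inl 2) - X (Sum.inl 0),
      X (Sum.inr 2) * X (Sum.inl 2) - X (Sum.inl 0) - X (Sum.inl 1),
      X (Sum.inr 0) * X (Sum.inr 1) * X (Sum.inr 2)
        - X (Sum.inr 0) - X (Sum.inr 1) - X (Sum.inr 2) - 2 }

namespace ThreeCycleProof

open MvPolynomial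

lemma pi_X (i : Fin 3) : piHom (X (Sum.inl i)) = ((Xu i : MvLaurent3ˣ) : MvLaurent3) := by
  simp [piHom]

lemma pi_Y (i : Fin 3) : piHom (X (Sum.inr i)) = yv i := by
  simp [piHom]

lemma yv0 : yv 0 = ((Xu 1 : MvLaurent3) + (Xu 2 : MvLaurent3)) * (((Xu 0)⁻¹ : MvLaurent3ˣ) : MvLaurent3) := by
  rw [yv]; rw [show (0+1 : Fin 3) = 1 by decide, show (0+2 : Fin 3) = 2 by decide]

lemma yv1 : yv 1 = ((Xu 2 : MvLaurent3) + (Xu 0 : MvLaurent3)) * (((Xu 1)⁻¹ : MvLaurent3ˣ) : MvLaurent3) := by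
  rw [yv]; rw [show (1+1 : Fin 3) = 2 by decide, show (1+2 : Fin 3) = 0 by decide]

lemma yv2 : yv 2 = ((Xu 0 : MvLaurent3) + (Xu 1 : MvLaurent3)) * (((Xu 2)⁻¹ : MvLaurent3ˣ) : MvLaurent3) := by
  rw [yv]; rw [show (2+1 : Fin 3) = 0 by decide, show (2+2 : Fin 3) = 1 by decide]

lemma pi_rv3_aux : yv 0 * yv 1 * yv 2 - yv 0 - yv 1 - yv 2 - 2 = 0 := by
  rw [yv0, yv1, yv2]
  set a : MvLaurent3 := (Xu 0 : MvLaurent3) with ha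
  set b : MvLaurent3 := (Xu 1 : MvLaurent3) with hb
  set c : MvLaurent3 := (Xu 2 : MvLaurent3) with hc
  set a' : MvLaurent3 := (((Xu 0)⁻¹ : MvLaurent3ˣ) : MvLaurent3) with ha'
  set b' : MvLaurent3 := (((Xu 1)⁻¹ : MvLaurent3ˣ) : MvLaurent3) with hb'
  set c' : MvLaurent3 := (((Xu 2)⁻¹ : MvLaurent3ˣ) : MvLaurent3) with hc'
  have h1 : a * a' = 1 := Units.mul_inv _
  have h2 : b * b' = 1 := Units.mul_inv _
  have h3 : c * c' = 1 := Units.mul_inv _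
  linear_combination (c^2*b'*c' + 2*b*c*b'*c' + b^2*b'*c' + a*c*b'*c' + a*b*b'*c') * h1 +
    (2*c*c' + c^2*a'*c' + b*c' + b*c*a'*c' + a*c') * h2 +
    (2 + c*b' + c*a' + b*a' + a*b') * h3



lemma Xu_coe (i : Fin 3) :
    ((Xu i : MvLaurent3ˣ) : MvLaurent3) = AddMonoidAlgebra.single (Finsupp.single i (1:ℤ)) (1:ℤ) := by
  rw [Xu]
  simp [AddMonoidAlgebra.of_apply]

noncomputable def natToInt : (Fin 3 →₀ ℕ) →+ (Fin 3 →₀ ℤ) :=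
  Finsupp.mapRange.addMonoidHom (Nat.castAddMonoidHom ℤ)

noncomputable def chi : MvPolynomial (Fin 3) ℤ →+* MvLaurent3 :=
  AddMonoidAlgebra.mapDomainRingHom ℤ natToInt

lemma chi_injective : Function.Injective chi := by
  have : Function.Injective natToInt := by
    exact Finsupp.mapRange_injective _ (by simp) (fun m n h => by simp only [Nat.coe_castAddMonoidHom] at h; exact_mod_cast h)
  exact AddMonoidAlgebra.mapDomain_injective this

noncomputable def psi : MvPolynomial (Fin 3) ℤ →+* MvLaurent3 :=
  (MvPolynomial.aeval (fun i => ((Xu i : MvLaurent3ˣ) : MvLaurent3))).toRingHom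

lemma psi_eq_chi : psi = chi := by
  apply MvPolynomial.ringHom_ext
  · intro a
    show (MvPolynomial.aeval _) (C a) = chi (C a)
    rw [MvPolynomial.aeval_C]
    have hC : (C a : MvPolynomial (Fin 3) ℤ) = AddMonoidAlgebra.single 0 a := by
      rw [MvPolynomial.C_apply, MvPolynomial.single_eq_monomial]
    rw [hC]
    show _ = AddMonoidAlgebra.mapDomain natToInt (AddMonoidAlgebra.single 0 a)
    rw [AddMonoidAlgebra.mapDomain_single]
    simp only [map_zero]
    rw [eq_intCast (algebraMap ℤ MvLaurent3)]
    show ((a : ℤ) : MvLaurent3) = _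
    rw [AddMonoidAlgebra.intCast_def]
    simp [Int.cast_id]
  · intro i
    show (MvPolynomial.aeval _) (X i) = chi (X i)
    rw [MvPolynomial.aeval_X, Xu_coe]
    have hX : (X i : MvPolynomial (Fin 3) ℤ) = AddMonoidAlgebra.single (Finsupp.single i 1) 1 := by
      rw [MvPolynomial.X, MvPolynomial.single_eq_monomial]
    rw [hX]
    show _ = AddMonoidAlgebra.mapDomain natToInt (AddMonoidAlgebra.single _ 1)
    rw [AddMonoidAlgebra.mapDomain_single]
    congr 1
    · rw [natToInt]; simp


abbrev A3 : Type := MvPolynomial (Fin 3 ⊕ Fin 3) ℤ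

noncomputable def Esub (v : Fin 3 ⊕ Fin 3) (t : A3) : A3 →ₐ[ℤ] A3 :=
  aeval (Function.update X v t)

lemma Esub_X_same (v : Fin 3 ⊕ Fin 3) (t : A3) : Esub v t (X v) = t := by
  rw [Esub, aeval_X, Function.update_self]

lemma Esub_X_ne (v w : Fin 3 ⊕ Fin 3) (t : A3) (h : w ≠ v) : Esub v t (X w) = X w := by
  rw [Esub, aeval_X, Function.update_of_ne h]

lemma Esub_C (v : Fin 3 ⊕ Fin 3) (t : A3) (a : ℤ) : Esub v t (C a) = C a := by
  rw [show (C a : A3) = algebraMap ℤ A3 a from rfl]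
  exact AlgHom.commutes _ a

/-- main congruence: `X v - t` divides `p - Esub v t p`. -/
lemma Esub_sub_dvd (v : Fin 3 ⊕ Fin 3) (t : A3) (p : A3) :
    (X v - t) ∣ (p - Esub v t p) := by
  induction p using MvPolynomial.induction_on with
  | C a => rw [Esub_C]; simp
  | add p q hp hq => rw [map_add]; have := dvd_add hp hq; convert this using 1; ring
  | mul_X p w hp =>
      rw [map_mul]
      by_cases hw : w = v
      · subst hw
        rw [Esub_X_same]
        have : p * X w - Esub w t p * t
            = (p - Esub w t p) * X w + Esub w t p * (X w - t) := by ring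
        rw [this]
        exact dvd_add (Dvd.dvd.mul_right hp _) (Dvd.dvd.mul_left (dvd_refl _) _)
      · rw [Esub_X_ne _ _ _ hw]
        have : p * X w - Esub v t p * X w = (p - Esub v t p) * X w := by ring
        rw [this]
        exact Dvd.dvd.mul_right hp _

lemma Esub_dvd_iff (v : Fin 3 ⊕ Fin 3) (t : A3) (ht : Esub v t t = t) (p : A3) :
    (X v - t) ∣ p ↔ Esub v t p = 0 := by
  constructor
  · rintro ⟨q, rfl⟩
    rw [map_mul, map_sub, Esub_X_same, ht, sub_self, zero_mul]
  · intro h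
    have := Esub_sub_dvd v t p
    rwa [h, sub_zero] at this

lemma Esub_prime (v : Fin 3 ⊕ Fin 3) (t : A3) (ht : Esub v t t = t)
    (hnz : (X v - t) ≠ 0) (hnu : ¬ IsUnit (X v - t)) : Prime (X v - t) := by
  refine ⟨hnz, hnu, fun a b hab => ?_⟩
  rw [Esub_dvd_iff v t ht] at hab
  rw [Esub_dvd_iff v t ht, Esub_dvd_iff v t ht]
  rw [map_mul] at hab
  exact mul_eq_zero.mp hab

noncomputable def toPoly (v : Fin 3 ⊕ Fin 3) : A3 →ₐ[ℤ] Polynomial ℤ :=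
  aeval (fun w => if w = v then Polynomial.X else 0)

lemma XsubC_facts (v : Fin 3 ⊕ Fin 3) (t : A3) (r : ℤ)
    (h : toPoly v (X v - t) = Polynomial.X - Polynomial.C r) :
    (X v - t) ≠ 0 ∧ ¬ IsUnit (X v - t) := by
  constructor
  · intro h0
    rw [h0, map_zero] at h
    exact Polynomial.X_sub_C_ne_zero r h.symm
  · intro hu
    have := hu.map (toPoly v)
    rw [h] at this
    exact Polynomial.not_isUnit_X_sub_C r this

-- the three concrete primes
lemma prime_u : Prime (X (Sum.inl 2) - (-X (Sum.inl 1)) : A3) := by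
  apply Esub_prime
  · rw [map_neg, Esub_X_ne]; simp
  all_goals
    have : toPoly (Sum.inl 2) ((X (Sum.inl 2) : A3) - (-X (Sum.inl 1)))
        = Polynomial.X - Polynomial.C 0 := by
      rw [toPoly]; simp
  · exact (XsubC_facts _ _ _ this).1
  · exact (XsubC_facts _ _ _ this).2

lemma prime_w (j : Fin 3) : Prime (X (Sum.inr j) - (-1) : A3) := by
  apply Esub_prime
  · simp only [map_neg, map_one]
  all_goals
    have : toPoly (Sum.inr j) ((X (Sum.inr j) : A3) - (-1))
        = Polynomial.X - Polynomial.C (-1) := by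
      rw [toPoly]; simp
  · exact (XsubC_facts _ _ _ this).1
  · exact (XsubC_facts _ _ _ this).2


noncomputable def sp : Fin 3 → A3 :=
  ![-X (Sum.inl 1) - X (Sum.inl 2),
    X (Sum.inr 1) * X (Sum.inl 1) - X (Sum.inl 2),
    X (Sum.inr 2) * X (Sum.inl 2) - X (Sum.inl 1)]

lemma main_syz (b0 b1 b2 : A3)
    (heq : b0 * sp 0 + b1 * sp 1 + b2 * sp 2 = 0) :
    ∃ d e12 e13 : A3,
      b0 = d * (X (Sum.inr 1) * X (Sum.inr 2) - 1) + e12 * sp 1 + e13 * sp 2 ∧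
      b1 = d * (X (Sum.inr 2) + 1) - e12 * sp 0 ∧
      b2 = d * (X (Sum.inr 1) + 1) - e13 * sp 0 := by
  have hsp0 : sp 0 = -X (Sum.inl 1) - X (Sum.inl 2) := rfl
  have hsp1 : sp 1 = X (Sum.inr 1) * X (Sum.inl 1) - X (Sum.inl 2) := rfl
  have hsp2 : sp 2 = X (Sum.inr 2) * X (Sum.inl 2) - X (Sum.inl 1) := rfl
  rw [hsp0, hsp1, hsp2] at heq
  have hu : (X (Sum.inl 2) - (-X (Sum.inl 1)) : A3)
      = X (Sum.inl 1) + X (Sum.inl 2) := by ring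
  -- Step A
  have hXl1 : ¬ ((X (Sum.inl 2) - (-X (Sum.inl 1)) : A3) ∣ X (Sum.inl 1)) := by
    intro hdvd
    rw [Esub_dvd_iff _ _ (by rw [map_neg, Esub_X_ne _ _ _ (by simp)])] at hdvd
    rw [Esub_X_ne _ _ _ (by simp)] at hdvd
    exact X_ne_zero _ hdvd
  have hdvd1 : (X (Sum.inl 2) - (-X (Sum.inl 1)) : A3) ∣
      (b1 * (X (Sum.inr 1) + 1) - b2 * (X (Sum.inr 2) + 1)) := by
    rcases prime_u.2.2 (X (Sum.inl 1))
        (b1 * (X (Sum.inr 1) + 1) - b2 * (X (Sum.inr 2) + 1))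
        ⟨b0 + b1 - X (Sum.inr 2) * b2, by linear_combination heq⟩ with h | h
    · exact absurd h hXl1
    · exact h
  obtain ⟨q, hq⟩ := hdvd1
  rw [hu] at hq
  have hunz : ((X (Sum.inl 1) + X (Sum.inl 2) : A3)) ≠ 0 := by
    rw [← hu]; exact prime_u.ne_zero
  -- b0 recovery
  have hb0 : b0 = X (Sum.inl 1) * q - b1 + X (Sum.inr 2) * b2 := by
    have : (X (Sum.inl 1) + X (Sum.inl 2) : A3) *
        (b0 + b1 - X (Sum.inr 2) * b2 - X (Sum.inl 1) * q) = 0 := by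
      linear_combination X (Sum.inl 1) * hq - heq
    rcases mul_eq_zero.mp this with h | h
    · exact absurd h hunz
    · linear_combination h
  -- Step B
  set F := Esub (Sum.inr 1) (-1) with hF
  have hFq := congrArg F hq
  have hFX1 : F (X (Sum.inl 1)) = X (Sum.inl 1) := Esub_X_ne _ _ _ (by simp)
  have hFX2 : F (X (Sum.inl 2)) = X (Sum.inl 2) := Esub_X_ne _ _ _ (by simp)
  have hFY1 : F (X (Sum.inr 1)) = -1 := Esub_X_same _ _
  have hFY2 : F (X (Sum.inr 2)) = X (Sum.inr 2) := Esub_X_ne _ _ _ (by simp)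
  simp only [map_sub, map_mul, map_add, map_one, hFY1, hFY2, hFX1, hFX2] at hFq
  -- hFq : F b1 * (-1 + 1) - F b2 * (Y2 + 1) = (X1 + X2) * F q
  have hw3u : ¬ ((X (Sum.inr 2) - (-1) : A3) ∣ (X (Sum.inl 1) + X (Sum.inl 2))) := by
    intro hdvd
    rw [Esub_dvd_iff _ _ (by rw [map_neg, map_one])] at hdvd
    rw [map_add, Esub_X_ne _ _ _ (by simp), Esub_X_ne _ _ _ (by simp)] at hdvd
    exact hunz hdvd
  have hdvd2 : (X (Sum.inr 2) - (-1) : A3) ∣ F q := by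
    rcases (prime_w 2).2.2 (X (Sum.inl 1) + X (Sum.inl 2)) (F q)
        ⟨-(F b2), by linear_combination -hFq⟩ with h | h
    · exact absurd h hw3u
    · exact h
  obtain ⟨h, hh⟩ := hdvd2
  have hFb2 : F b2 = -((X (Sum.inl 1) + X (Sum.inl 2)) * h) := by
    have hw3nz : ((X (Sum.inr 2) - (-1) : A3)) ≠ 0 := (prime_w 2).ne_zero
    have : (X (Sum.inr 2) - (-1) : A3) * (F b2 + (X (Sum.inl 1) + X (Sum.inl 2)) * h) = 0 := by
      linear_combination -hFq - (X (Sum.inl 1) + X (Sum.inl 2)) * hh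
    rcases mul_eq_zero.mp this with h' | h'
    · exact absurd h' hw3nz
    · linear_combination h'
  -- Step C
  obtain ⟨b2s, hb2s⟩ := Esub_sub_dvd (Sum.inr 1) (-1) b2
  obtain ⟨qs, hqs⟩ := Esub_sub_dvd (Sum.inr 1) (-1) q
  rw [← hF] at hb2s hqs
  have e2 : b2 = -((X (Sum.inl 1) + X (Sum.inl 2)) * h)
      + (X (Sum.inr 1) + 1) * b2s := by
    rw [← hFb2]; linear_combination hb2s
  have eqp : q = (X (Sum.inr 2) + 1) * h + (X (Sum.inr 1) + 1) * qs := by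
    linear_combination hqs + hh
  -- Step D
  have hb1 : b1 = b2s * (X (Sum.inr 2) + 1) + (X (Sum.inl 1) + X (Sum.inl 2)) * qs := by
    have hw2nz : ((X (Sum.inr 1) - (-1) : A3)) ≠ 0 := (prime_w 1).ne_zero
    have : (X (Sum.inr 1) - (-1) : A3) *
        (b1 - b2s * (X (Sum.inr 2) + 1) - (X (Sum.inl 1) + X (Sum.inl 2)) * qs) = 0 := by
      linear_combination hq + (X (Sum.inr 2) + 1) * e2
        + (X (Sum.inl 1) + X (Sum.inl 2)) * eqp
    rcases mul_eq_zero.mp this with h' | h'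
    · exact absurd h' hw2nz
    · linear_combination h'
  refine ⟨b2s, qs, -h, ?_, ?_, ?_⟩
  · rw [hsp1, hsp2, hb0, hb1]
    linear_combination X (Sum.inl 1) * eqp + X (Sum.inr 2) * e2
  · rw [hsp0, hb1]; ring
  · rw [hsp0, e2]; ring

noncomputable def rv : Fin 4 → A3 :=
  ![X (Sum.inr 0) * X (Sum.inl 0) - X (Sum.inl 1) - X (Sum.inl 2),
    X (Sum.inr 1) * X (Sum.inl 1) - X (Sum.inl 2) - X (Sum.inl 0),
    X (Sum.inr 2) * X (Sum.inl 2) - X (Sum.inl 0) - X (Sum.inl 1),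
    X (Sum.inr 0) * X (Sum.inr 1) * X (Sum.inr 2)
      - X (Sum.inr 0) - X (Sum.inr 1) - X (Sum.inr 2) - 2]

noncomputable def KK : Ideal A3 := Ideal.span (Set.range rv)

lemma rv0_eq : rv 0 = X (Sum.inr 0) * X (Sum.inl 0) - X (Sum.inl 1) - X (Sum.inl 2) := rfl
lemma rv1_eq : rv 1 = X (Sum.inr 1) * X (Sum.inl 1) - X (Sum.inl 2) - X (Sum.inl 0) := rfl
lemma rv2_eq : rv 2 = X (Sum.inr 2) * X (Sum.inl 2) - X (Sum.inl 0) - X (Sum.inl 1) := rfl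
lemma rv3_eq : rv 3 = X (Sum.inr 0) * X (Sum.inr 1) * X (Sum.inr 2)
      - X (Sum.inr 0) - X (Sum.inr 1) - X (Sum.inr 2) - 2 := rfl

lemma rv_mem (i : Fin 4) : rv i ∈ KK := Ideal.subset_span ⟨i, rfl⟩

lemma mem_KK_iff (p : A3) :
    p ∈ KK ↔ ∃ c : Fin 4 → A3,
      c 0 * rv 0 + c 1 * rv 1 + c 2 * rv 2 + c 3 * rv 3 = p := by
  rw [KK, Ideal.span, Submodule.mem_span_range_iff_exists_fun]
  refine exists_congr fun c => ?_
  rw [Fin.sum_univ_four]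
  simp [smul_eq_mul]

/-- `γ` : kill all the x-variables. -/
noncomputable def gam : A3 →ₐ[ℤ] A3 :=
  aeval (Sum.elim (fun _ => 0) (fun j => X (Sum.inr j)))

lemma gam_Xl (i : Fin 3) : gam (X (Sum.inl i)) = 0 := by rw [gam, aeval_X]; rfl
lemma gam_Xr (j : Fin 3) : gam (X (Sum.inr j)) = X (Sum.inr j) := by rw [gam, aeval_X]; rfl

lemma gam_zero_mem (p : A3) (hp : gam p = 0) :
    ∃ α : Fin 3 → A3,
      p = α 0 * X (Sum.inl 0) + α 1 * X (Sum.inl 1) + α 2 * X (Sum.inl 2) := by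
  have key : ∀ q : A3, q - gam q ∈
      Ideal.span (Set.range (fun i : Fin 3 => (X (Sum.inl i) : A3))) := by
    intro q
    induction q using MvPolynomial.induction_on with
    | C a =>
        have : gam (C a) = C a := by
          rw [show (C a : A3) = algebraMap ℤ A3 a from rfl]; exact AlgHom.commutes _ a
        rw [this, sub_self]; exact Ideal.zero_mem _
    | add p q hp hq =>
        rw [map_add]
        have := Ideal.add_mem _ hp hq
        convert this using 1; ring
    | mul_X p w hp =>
        rw [map_mul]
        cases w with
        | inl i =>
            rw [gam_Xl, mul_zero, sub_zero]
            have hXmem : (X (Sum.inl i) : A3) ∈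
                Ideal.span (Set.range (fun i : Fin 3 => (X (Sum.inl i) : A3))) :=
              Ideal.subset_span ⟨i, rfl⟩
            exact Ideal.mul_mem_left _ p hXmem
        | inr j =>
            rw [gam_Xr]
            have : p * X (Sum.inr j) - gam p * X (Sum.inr j)
                = (p - gam p) * X (Sum.inr j) := by ring
            rw [this]
            exact Ideal.mul_mem_right _ _ hp
  have h2 : p ∈ Submodule.span A3 (Set.range (fun i : Fin 3 => (X (Sum.inl i) : A3))) := by
    have := key p
    rwa [hp, sub_zero] at this
  rw [Submodule.mem_span_range_iff_exists_fun] at h2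
  obtain ⟨c, hc⟩ := h2
  refine ⟨c, ?_⟩
  rw [← hc, Fin.sum_univ_three]
  simp [smul_eq_mul]

lemma rv3_ne_zero : rv 3 ≠ 0 := by
  intro h
  have h2 := congrArg (eval (fun _ : Fin 3 ⊕ Fin 3 => (0:ℤ))) h
  rw [rv3_eq] at h2
  simp [map_ofNat] at h2

lemma sig1 : (X (Sum.inl 0) : A3) * rv 3
    = (X (Sum.inr 1) * X (Sum.inr 2) - 1) * rv 0
      + (X (Sum.inr 2) + 1) * rv 1 + (X (Sum.inr 1) + 1) * rv 2 := by
  rw [rv0_eq, rv1_eq, rv2_eq, rv3_eq]; ring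

lemma sig2 : (X (Sum.inl 1) : A3) * rv 3
    = (X (Sum.inr 2) * X (Sum.inr 0) - 1) * rv 1
      + (X (Sum.inr 0) + 1) * rv 2 + (X (Sum.inr 2) + 1) * rv 0 := by
  rw [rv0_eq, rv1_eq, rv2_eq, rv3_eq]; ring

lemma sig3 : (X (Sum.inl 2) : A3) * rv 3
    = (X (Sum.inr 0) * X (Sum.inr 1) - 1) * rv 2
      + (X (Sum.inr 1) + 1) * rv 0 + (X (Sum.inr 0) + 1) * rv 1 := by
  rw [rv0_eq, rv1_eq, rv2_eq, rv3_eq]; ring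

lemma peel0 (g : A3) (hg : X (Sum.inl 0) * g ∈ KK) : g ∈ KK := by
  obtain ⟨c, hc⟩ := (mem_KK_iff _).mp hg
  -- step 1 : gamma analysis of c 3
  have hg3 : gam (c 3) = 0 := by
    have h := congrArg gam hc
    simp only [map_add, map_mul] at h
    rw [rv0_eq, rv1_eq, rv2_eq, rv3_eq] at h
    simp only [map_sub, map_mul, map_add, map_one, map_ofNat, gam_Xl, gam_Xr, zero_mul, mul_zero] at h
    -- h : ... = gam (X (inl 0)) * gam g = 0
    have h' : gam (c 3) * rv 3 = 0 := by
      rw [rv3_eq]; linear_combination h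
    rcases mul_eq_zero.mp h' with h'' | h''
    · exact h''
    · exact absurd h'' rv3_ne_zero
  obtain ⟨α, hα⟩ := gam_zero_mem _ hg3
  -- step 2 : new representation
  have key : X (Sum.inl 0) * (g - α 0 * rv 3)
      = (c 0 + α 1 * (X (Sum.inr 2) + 1) + α 2 * (X (Sum.inr 1) + 1)) * rv 0
      + (c 1 + α 1 * (X (Sum.inr 2) * X (Sum.inr 0) - 1) + α 2 * (X (Sum.inr 0) + 1)) * rv 1
      + (c 2 + α 1 * (X (Sum.inr 0) + 1) + α 2 * (X (Sum.inr 0) * X (Sum.inr 1) - 1)) * rv 2 := by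
    linear_combination -hc + rv 3 * hα + α 1 * sig2 + α 2 * sig3
  set d0 : A3 := c 0 + α 1 * (X (Sum.inr 2) + 1) + α 2 * (X (Sum.inr 1) + 1) with hd0
  set d1 : A3 := c 1 + α 1 * (X (Sum.inr 2) * X (Sum.inr 0) - 1) + α 2 * (X (Sum.inr 0) + 1) with hd1
  set d2 : A3 := c 2 + α 1 * (X (Sum.inr 0) + 1) + α 2 * (X (Sum.inr 0) * X (Sum.inr 1) - 1) with hd2
  -- step 3 : apply beta = Esub (inl 0) 0
  set B := Esub (Sum.inl 0) 0 with hB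
  have hBkey := congrArg B key
  have hBX0 : B (X (Sum.inl 0)) = 0 := Esub_X_same _ _
  have hBX1 : B (X (Sum.inl 1)) = X (Sum.inl 1) := Esub_X_ne _ _ _ (by simp)
  have hBX2 : B (X (Sum.inl 2)) = X (Sum.inl 2) := Esub_X_ne _ _ _ (by simp)
  have hBY : ∀ j : Fin 3, B (X (Sum.inr j)) = X (Sum.inr j) :=
    fun j => Esub_X_ne _ _ _ (by simp)
  rw [rv0_eq, rv1_eq, rv2_eq] at hBkey
  simp only [map_add, map_sub, map_mul, map_one, hBX0, hBX1, hBX2, hBY, zero_mul, mul_zero] at hBkey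
  -- now hBkey should say : 0 = B d0 * sp 0 + B d1 * sp 1 + B d2 * sp 2 (in expanded form)
  have hsyz : B d0 * sp 0 + B d1 * sp 1 + B d2 * sp 2 = 0 := by
    show B d0 * (-X (Sum.inl 1) - X (Sum.inl 2))
      + B d1 * (X (Sum.inr 1) * X (Sum.inl 1) - X (Sum.inl 2))
      + B d2 * (X (Sum.inr 2) * X (Sum.inl 2) - X (Sum.inl 1)) = 0
    linear_combination -hBkey
  obtain ⟨d, e12, e13, hb0, hb1, hb2⟩ := main_syz _ _ _ hsyz
  have hsp0 : sp 0 = -X (Sum.inl 1) - X (Sum.inl 2) := rfl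
  have hsp1 : sp 1 = X (Sum.inr 1) * X (Sum.inl 1) - X (Sum.inl 2) := rfl
  have hsp2 : sp 2 = X (Sum.inr 2) * X (Sum.inl 2) - X (Sum.inl 1) := rfl
  simp only [hsp0, hsp1, hsp2] at hb0 hb1 hb2
  obtain ⟨t0, ht0⟩ := Esub_sub_dvd (Sum.inl 0) 0 d0
  obtain ⟨t1, ht1⟩ := Esub_sub_dvd (Sum.inl 0) 0 d1
  obtain ⟨t2, ht2⟩ := Esub_sub_dvd (Sum.inl 0) 0 d2
  rw [← hB] at ht0 ht1 ht2
  rw [sub_zero] at ht0 ht1 ht2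
  -- step 4 : final identity and cancellation
  have hfinal : X (Sum.inl 0) * (g - α 0 * rv 3
      - (t0 * rv 0 + t1 * rv 1 + t2 * rv 2 + d * rv 3
         + e12 * (rv 0 + X (Sum.inr 0) * rv 1) + e13 * (rv 0 + X (Sum.inr 0) * rv 2))) = 0 := by
    simp only [rv0_eq, rv1_eq, rv2_eq, rv3_eq] at key ⊢
    linear_combination key + (X (Sum.inr 0) * X (Sum.inl 0) - X (Sum.inl 1) - X (Sum.inl 2)) * ht0
      + (X (Sum.inr 1) * X (Sum.inl 1) - X (Sum.inl 2) - X (Sum.inl 0)) * ht1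
      + (X (Sum.inr 2) * X (Sum.inl 2) - X (Sum.inl 0) - X (Sum.inl 1)) * ht2
      + (X (Sum.inr 0) * X (Sum.inl 0) - X (Sum.inl 1) - X (Sum.inl 2)) * hb0
      + (X (Sum.inr 1) * X (Sum.inl 1) - X (Sum.inl 2) - X (Sum.inl 0)) * hb1
      + (X (Sum.inr 2) * X (Sum.inl 2) - X (Sum.inl 0) - X (Sum.inl 1)) * hb2
  have hcancel := mul_eq_zero.mp hfinal
  rcases hcancel with h | h
  · exact absurd h (X_ne_zero _)
  · have hgeq : g = α 0 * rv 3 + (t0 * rv 0 + t1 * rv 1 + t2 * rv 2 + d * rv 3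
         + e12 * (rv 0 + X (Sum.inr 0) * rv 1) + e13 * (rv 0 + X (Sum.inr 0) * rv 2)) := by
      linear_combination h
    rw [hgeq]
    refine Ideal.add_mem _ (Ideal.mul_mem_left _ _ (rv_mem 3)) ?_
    refine Ideal.add_mem _ ?_ (Ideal.mul_mem_left _ _
      (Ideal.add_mem _ (rv_mem 0) (Ideal.mul_mem_left _ _ (rv_mem 2))))
    refine Ideal.add_mem _ ?_ (Ideal.mul_mem_left _ _
      (Ideal.add_mem _ (rv_mem 0) (Ideal.mul_mem_left _ _ (rv_mem 1))))
    refine Ideal.add_mem _ (Ideal.add_mem _ (Ideal.add_mem _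
      (Ideal.mul_mem_left _ _ (rv_mem 0)) (Ideal.mul_mem_left _ _ (rv_mem 1)))
      (Ideal.mul_mem_left _ _ (rv_mem 2))) (Ideal.mul_mem_left _ _ (rv_mem 3))

/-! ### rotation -/

noncomputable def rot : A3 ≃ₐ[ℤ] A3 :=
  renameEquiv ℤ (Equiv.sumCongr (Equiv.addRight (1 : Fin 3)) (Equiv.addRight (1 : Fin 3)))

lemma rot_Xl (i : Fin 3) : rot (X (Sum.inl i)) = X (Sum.inl (i + 1)) := by
  rw [rot, renameEquiv_apply, rename_X]; rfl

lemma rot_Xr (i : Fin 3) : rot (X (Sum.inr i)) = X (Sum.inr (i + 1)) := by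
  rw [rot, renameEquiv_apply, rename_X]; rfl

lemma rot_rv0 : rot (rv 0) = rv 1 := by
  rw [rv0_eq, rv1_eq, map_sub, map_sub, map_mul, rot_Xl, rot_Xl, rot_Xl, rot_Xr]
  simp only [show ((0:Fin 3)+1 = 1) by decide, show ((1:Fin 3)+1 = 2) by decide,
    show ((2:Fin 3)+1 = 0) by decide]

lemma rot_rv1 : rot (rv 1) = rv 2 := by
  rw [rv1_eq, rv2_eq, map_sub, map_sub, map_mul, rot_Xl, rot_Xl, rot_Xl, rot_Xr]
  simp only [show ((0:Fin 3)+1 = 1) by decide, show ((1:Fin 3)+1 = 2) by decide,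
    show ((2:Fin 3)+1 = 0) by decide]

lemma rot_rv2 : rot (rv 2) = rv 0 := by
  rw [rv2_eq, rv0_eq, map_sub, map_sub, map_mul, rot_Xl, rot_Xl, rot_Xl, rot_Xr]
  simp only [show ((0:Fin 3)+1 = 1) by decide, show ((1:Fin 3)+1 = 2) by decide,
    show ((2:Fin 3)+1 = 0) by decide]

lemma rot_rv3 : rot (rv 3) = rv 3 := by
  rw [rv3_eq]
  simp only [map_sub, map_mul, map_ofNat, rot_Xr]
  simp only [show ((0:Fin 3)+1 = 1) by decide, show ((1:Fin 3)+1 = 2) by decide,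
    show ((2:Fin 3)+1 = 0) by decide]
  ring

lemma rot_symm_Xl1 : rot.symm (X (Sum.inl 1)) = X (Sum.inl 0) := by
  apply rot.injective
  rw [AlgEquiv.apply_symm_apply, rot_Xl]
  simp only [show ((0:Fin 3)+1 = 1) by decide]

lemma rot_symm_Xl2 : rot.symm (X (Sum.inl 2)) = X (Sum.inl 1) := by
  apply rot.injective
  rw [AlgEquiv.apply_symm_apply, rot_Xl]
  simp only [show ((1:Fin 3)+1 = 2) by decide]

lemma map_KK_le (phi : A3 →ₐ[ℤ] A3) (h : ∀ i, phi (rv i) ∈ KK) (p : A3) (hp : p ∈ KK) :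
    phi p ∈ KK := by
  have : KK ≤ Ideal.comap (phi : A3 →+* A3) KK := by
    rw [KK, Ideal.span_le]
    rintro x ⟨i, rfl⟩
    exact h i
  exact this hp

lemma rot_mem (p : A3) (hp : p ∈ KK) : rot p ∈ KK := by
  refine map_KK_le rot.toAlgHom ?_ p hp
  intro i
  fin_cases i
  · rw [show ((⟨0,by norm_num⟩ : Fin 4) = 0) from rfl]
    show rot (rv 0) ∈ KK
    rw [rot_rv0]; exact rv_mem 1
  · show rot (rv 1) ∈ KK
    rw [rot_rv1]; exact rv_mem 2
  · show rot (rv 2) ∈ KK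
    rw [rot_rv2]; exact rv_mem 0
  · show rot (rv 3) ∈ KK
    rw [rot_rv3]; exact rv_mem 3

lemma rot_symm_mem (p : A3) (hp : p ∈ KK) : rot.symm p ∈ KK := by
  refine map_KK_le rot.symm.toAlgHom ?_ p hp
  intro i
  have inj := rot.injective
  fin_cases i
  · show rot.symm (rv 0) ∈ KK
    have : rot.symm (rv 0) = rv 2 := by
      apply inj; rw [AlgEquiv.apply_symm_apply, rot_rv2]
    rw [this]; exact rv_mem 2
  · show rot.symm (rv 1) ∈ KK
    have : rot.symm (rv 1) = rv 0 := by
      apply inj; rw [AlgEquiv.apply_symm_apply, rot_rv0]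
    rw [this]; exact rv_mem 0
  · show rot.symm (rv 2) ∈ KK
    have : rot.symm (rv 2) = rv 1 := by
      apply inj; rw [AlgEquiv.apply_symm_apply, rot_rv1]
    rw [this]; exact rv_mem 1
  · show rot.symm (rv 3) ∈ KK
    have : rot.symm (rv 3) = rv 3 := by
      apply inj; rw [AlgEquiv.apply_symm_apply, rot_rv3]
    rw [this]; exact rv_mem 3

lemma peel1 (g : A3) (hg : X (Sum.inl 1) * g ∈ KK) : g ∈ KK := by
  have h1 : X (Sum.inl 0) * rot.symm g ∈ KK := by
    have : X (Sum.inl 0) * rot.symm g = rot.symm (X (Sum.inl 1) * g) := by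
      rw [map_mul, rot_symm_Xl1]
    rw [this]
    exact rot_symm_mem _ hg
  have h2 := peel0 _ h1
  have := rot_mem _ h2
  rwa [AlgEquiv.apply_symm_apply] at this

lemma peel2 (g : A3) (hg : X (Sum.inl 2) * g ∈ KK) : g ∈ KK := by
  have h1 : X (Sum.inl 1) * rot.symm g ∈ KK := by
    have : X (Sum.inl 1) * rot.symm g = rot.symm (X (Sum.inl 2) * g) := by
      rw [map_mul, rot_symm_Xl2]
    rw [this]
    exact rot_symm_mem _ hg
  have h2 := peel1 _ h1
  have := rot_mem _ h2
  rwa [AlgEquiv.apply_symm_apply] at this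

lemma peel_pow (N : ℕ) (g : A3)
    (hg : (X (Sum.inl 0) * X (Sum.inl 1) * X (Sum.inl 2))^N * g ∈ KK) : g ∈ KK := by
  induction N generalizing g with
  | zero => simpa using hg
  | succ n ih =>
      apply ih
      have h0 : X (Sum.inl 0) * (X (Sum.inl 1) * (X (Sum.inl 2) *
          ((X (Sum.inl 0) * X (Sum.inl 1) * X (Sum.inl 2))^n * g))) ∈ KK := by
        have : X (Sum.inl 0) * (X (Sum.inl 1) * (X (Sum.inl 2) *
            ((X (Sum.inl 0) * X (Sum.inl 1) * X (Sum.inl 2))^n * g)))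
            = (X (Sum.inl 0) * X (Sum.inl 1) * X (Sum.inl 2))^(n+1) * g := by ring
        rw [this]; exact hg
      exact peel2 _ (peel1 _ (peel0 _ h0))

noncomputable def xm : A3 := X (Sum.inl 0) * X (Sum.inl 1) * X (Sum.inl 2)

noncomputable def xm' : MvPolynomial (Fin 3) ℤ := X 0 * X 1 * X 2

lemma rename_xm' : rename Sum.inl xm' = xm := by
  rw [xm', xm, map_mul, map_mul, rename_X, rename_X, rename_X]

lemma reduce (g : A3) :
    ∃ (N : ℕ) (h : MvPolynomial (Fin 3) ℤ), xm ^ N * g - rename Sum.inl h ∈ KK := by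
  induction g using MvPolynomial.induction_on with
  | C a =>
      refine ⟨0, C a, ?_⟩
      rw [pow_zero, one_mul, rename_C, sub_self]
      exact Ideal.zero_mem _
  | add p q hp hq =>
      obtain ⟨N₁, h₁, m₁⟩ := hp
      obtain ⟨N₂, h₂, m₂⟩ := hq
      refine ⟨N₁ + N₂, xm' ^ N₂ * h₁ + xm' ^ N₁ * h₂, ?_⟩
      have expand : xm ^ (N₁ + N₂) * (p + q)
          - rename Sum.inl (xm' ^ N₂ * h₁ + xm' ^ N₁ * h₂)
          = xm ^ N₂ * (xm ^ N₁ * p - rename Sum.inl h₁)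
            + xm ^ N₁ * (xm ^ N₂ * q - rename Sum.inl h₂) := by
        rw [map_add, map_mul, map_mul, map_pow, map_pow, rename_xm']
        ring
      rw [expand]
      exact Ideal.add_mem _ (Ideal.mul_mem_left _ _ m₁) (Ideal.mul_mem_left _ _ m₂)
  | mul_X p v hp =>
      obtain ⟨N₁, h₁, m₁⟩ := hp
      cases v with
      | inl i =>
          refine ⟨N₁, h₁ * X i, ?_⟩
          have expand : xm ^ N₁ * (p * X (Sum.inl i)) - rename Sum.inl (h₁ * X i)
              = (xm ^ N₁ * p - rename Sum.inl h₁) * X (Sum.inl i) := by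
            rw [map_mul, rename_X]; ring
          rw [expand]
          exact Ideal.mul_mem_right _ _ m₁
      | inr j =>
          have hj : j = 0 ∨ j = 1 ∨ j = 2 := by revert j; decide
          rcases hj with rfl | rfl | rfl
          · refine ⟨N₁ + 1, h₁ * (X 1 * X 2 * (X 1 + X 2)), ?_⟩
            have expand : xm ^ (N₁+1) * (p * X (Sum.inr 0))
                - rename Sum.inl (h₁ * (X 1 * X 2 * (X 1 + X 2)))
                = (X (Sum.inr 0) * xm) * (xm ^ N₁ * p - rename Sum.inl h₁)
                  + rename Sum.inl h₁ * (X (Sum.inl 1) * X (Sum.inl 2)) * rv 0 := by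
              rw [map_mul, map_mul, map_mul, map_add, rename_X, rename_X, rv0_eq, xm]
              ring
            rw [expand]
            exact Ideal.add_mem _ (Ideal.mul_mem_left _ _ m₁)
              (Ideal.mul_mem_left _ _ (rv_mem 0))
          · refine ⟨N₁ + 1, h₁ * (X 2 * X 0 * (X 2 + X 0)), ?_⟩
            have expand : xm ^ (N₁+1) * (p * X (Sum.inr 1))
                - rename Sum.inl (h₁ * (X 2 * X 0 * (X 2 + X 0)))
                = (X (Sum.inr 1) * xm) * (xm ^ N₁ * p - rename Sum.inl h₁)
                  + rename Sum.inl h₁ * (X (Sum.inl 2) * X (Sum.inl 0)) * rv 1 := by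
              rw [map_mul, map_mul, map_mul, map_add, rename_X, rename_X, rv1_eq, xm]
              ring
            rw [expand]
            exact Ideal.add_mem _ (Ideal.mul_mem_left _ _ m₁)
              (Ideal.mul_mem_left _ _ (rv_mem 1))
          · refine ⟨N₁ + 1, h₁ * (X 0 * X 1 * (X 0 + X 1)), ?_⟩
            have expand : xm ^ (N₁+1) * (p * X (Sum.inr 2))
                - rename Sum.inl (h₁ * (X 0 * X 1 * (X 0 + X 1)))
                = (X (Sum.inr 2) * xm) * (xm ^ N₁ * p - rename Sum.inl h₁)
                  + rename Sum.inl h₁ * (X (Sum.inl 0) * X (Sum.inl 1)) * rv 2 := by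
              rw [map_mul, map_mul, map_mul, map_add, rename_X, rename_X, rv2_eq, xm]
              ring
            rw [expand]
            exact Ideal.add_mem _ (Ideal.mul_mem_left _ _ m₁)
              (Ideal.mul_mem_left _ _ (rv_mem 2))



/-! ### Identification of `K` with `KK` -/

lemma K_eq_KK : K = KK := by
  rw [KK]
  have hset : (Set.range rv) =
      ({X (Sum.inr 0) * X (Sum.inl 0) - X (Sum.inl 1) - X (Sum.inl 2),
        X (Sum.inr 1) * X (Sum.inl 1) - X (Sum.inl 2) - X (Sum.inl 0),
        X (Sum.inr 2) * X (Sum.inl 2) - X (Sum.inl 0) - X (Sum.inl 1),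
        X (Sum.inr 0) * X (Sum.inr 1) * X (Sum.inr 2)
          - X (Sum.inr 0) - X (Sum.inr 1) - X (Sum.inr 2) - 2} :
        Set (MvPolynomial (Fin 3 ⊕ Fin 3) ℤ)) := by
    ext x
    constructor
    · rintro ⟨i, rfl⟩
      have hi : i = 0 ∨ i = 1 ∨ i = 2 ∨ i = 3 := by revert i; decide
      rcases hi with rfl | rfl | rfl | rfl
      · rw [rv0_eq]; exact Set.mem_insert _ _
      · rw [rv1_eq]; exact Set.mem_insert_of_mem _ (Set.mem_insert _ _)
      · rw [rv2_eq]; exact Set.mem_insert_of_mem _ (Set.mem_insert_of_mem _ (Set.mem_insert _ _))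
      · rw [rv3_eq]; exact Set.mem_insert_of_mem _ (Set.mem_insert_of_mem _
          (Set.mem_insert_of_mem _ rfl))
    · rintro (rfl | rfl | rfl | h)
      · exact ⟨0, rv0_eq⟩
      · exact ⟨1, rv1_eq⟩
      · exact ⟨2, rv2_eq⟩
      · rw [Set.mem_singleton_iff] at h
        rw [h]; exact ⟨3, rv3_eq⟩
  rw [K, hset]

/-! ### `KK ⊆ ker piHom` -/

lemma pi_rv_zero (i : Fin 4) : piHom (rv i) = 0 := by
  have hi : i = 0 ∨ i = 1 ∨ i = 2 ∨ i = 3 := by revert i; decide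
  rcases hi with rfl | rfl | rfl | rfl
  · rw [rv0_eq, map_sub, map_sub, map_mul, pi_X, pi_X, pi_X, pi_Y, yv0]
    rw [mul_assoc, Units.inv_mul, mul_one]
    ring
  · rw [rv1_eq, map_sub, map_sub, map_mul, pi_X, pi_X, pi_X, pi_Y, yv1]
    rw [mul_assoc, Units.inv_mul, mul_one]
    ring
  · rw [rv2_eq, map_sub, map_sub, map_mul, pi_X, pi_X, pi_X, pi_Y, yv2]
    rw [mul_assoc, Units.inv_mul, mul_one]
    ring
  · rw [rv3_eq]
    rw [map_sub, map_sub, map_sub, map_sub, map_mul, map_mul, map_ofNat,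
      pi_Y, pi_Y, pi_Y]
    exact pi_rv3_aux

lemma KK_le_ker : KK ≤ RingHom.ker piHom := by
  rw [KK, Ideal.span_le]
  rintro x ⟨i, rfl⟩
  exact pi_rv_zero i

/-! ### `ker piHom ⊆ KK` -/

lemma pi_rename (h : MvPolynomial (Fin 3) ℤ) :
    piHom (rename Sum.inl h) = psi h := by
  show (MvPolynomial.aeval _) (rename Sum.inl h) = psi h
  rw [aeval_rename]
  rfl

lemma ker_le_KK : RingHom.ker piHom ≤ KK := by
  intro f hf
  rw [RingHom.mem_ker] at hf
  obtain ⟨N, h, hm⟩ := reduce f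
  have h0 : piHom (xm ^ N * f - rename Sum.inl h) = 0 := KK_le_ker hm
  rw [map_sub, map_mul, hf, mul_zero, zero_sub, neg_eq_zero, pi_rename] at h0
  have hh : h = 0 := by
    apply chi_injective
    rw [← psi_eq_chi, h0, map_zero]
  rw [hh, map_zero, sub_zero] at hm
  apply peel_pow N f
  rw [xm] at hm
  exact hm

/-! ### the range part -/

lemma range_eq : piHom.range = Subring.closure
    { ((Xu 0 : MvLaurent3ˣ) : MvLaurent3), ((Xu 1 : MvLaurent3ˣ) : MvLaurent3),
      ((Xu 2 : MvLaurent3ˣ) : MvLaurent3), yv 0, yv 1, yv 2 } := by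
  apply le_antisymm
  · rintro y ⟨p, rfl⟩
    induction p using MvPolynomial.induction_on with
    | C a =>
        have : piHom (C a) = ((a : ℤ) : MvLaurent3) := by
          show (MvPolynomial.aeval _) (C a) = _
          rw [aeval_C]
          exact eq_intCast _ a
        rw [this]
        exact intCast_mem _ a
    | add p q hp hq =>
        rw [map_add]; exact Subring.add_mem _ hp hq
    | mul_X p v hp =>
        rw [map_mul]
        refine Subring.mul_mem _ hp ?_
        cases v with
        | inl i =>
            rw [pi_X]
            have hi : i = 0 ∨ i = 1 ∨ i = 2 := by revert i; decide
            rcases hi with rfl | rfl | rfl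
            · exact Subring.subset_closure (by simp)
            · exact Subring.subset_closure (by simp)
            · exact Subring.subset_closure (by simp)
        | inr j =>
            rw [pi_Y]
            have hj : j = 0 ∨ j = 1 ∨ j = 2 := by revert j; decide
            rcases hj with rfl | rfl | rfl
            · exact Subring.subset_closure (by simp)
            · exact Subring.subset_closure (by simp)
            · exact Subring.subset_closure (by simp)
  · rw [Subring.closure_le]
    rintro y (rfl | rfl | rfl | rfl | rfl | h)
    · exact ⟨X (Sum.inl 0), pi_X 0⟩
    · exact ⟨X (Sum.inl 1), pi_X 1⟩
    · exact ⟨X (Sum.inl 2), pi_X 2⟩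
    · exact ⟨X (Sum.inr 0), pi_Y 0⟩
    · exact ⟨X (Sum.inr 1), pi_Y 1⟩
    · rw [Set.mem_singleton_iff] at h
      rw [h]; exact ⟨X (Sum.inr 2), pi_Y 2⟩

end ThreeCycleProof

/-- `ℤ[x₁,x₂,x₃,y₁,y₂,y₃]/K` is isomorphic to the subring of
`ℤ[x₁^{±1},x₂^{±1},x₃^{±1}]` generated by `x₁,x₂,x₃,(x₂+x₃)/x₁,(x₃+x₁)/x₂,(x₁+x₂)/x₃`,
via the map sending `xᵢ ↦ xᵢ` and `yᵢ ↦` the corresponding Laurent polynomial: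
equivalently, `K` is exactly the kernel of `π` and the image of `π` is exactly
that subring (so `π` descends to the desired isomorphism). -/
theorem lower_bound_presentation_three_cycle :
    RingHom.ker piHom = K ∧
    piHom.range = Subring.closure
      { ((Xu 0 : MvLaurent3ˣ) : MvLaurent3), ((Xu 1 : MvLaurent3ˣ) : MvLaurent3),
        ((Xu 2 : MvLaurent3ˣ) : MvLaurent3), yv 0, yv 1, yv 2 } := by
  constructor
  · rw [ThreeCycleProof.K_eq_KK]
    exact le_antisymm ThreeCycleProof.ker_le_KK ThreeCycleProof.KK_le_ker
  · exact ThreeCycleProof.range_eq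

-- check axioms
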